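/- Suppose there exists a symmetric P ∈ ℝ^{n×n} such that the dissipation matrix satisfies K(P) ⪯ 0 (negative semidefinite). Then the system is (Q,S,R)-dissipative; in fact the quadratic function V(x) = xᵀPx is a storage function, i.e. for all integers 0 ≤ k₂ < k₁ and every trajectory (u,x,y) of the system, V(x_{k₁}) − V(x_{k₂}) ≤ Σ_{i=k₂}^{k₁−1} s(u_i, y_i). -/

import Mathlib

open Matrix

/-- `M ⪯ 0`: a real matrix is negative semidefinite iff `-M` is positive semidefinite. -/
def Matrix.NegSemidef {k : Type*} [Fintype k] (M : Matrix k k ℝ) : Prop :=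
  (-M).PosSemidef

/-- Quadratic supply rate `s(u,y) = uᵀRu + uᵀSᵀy + yᵀSu + yᵀQy`. -/
noncomputable def supplyRate {m p : ℕ} (R : Matrix (Fin m) (Fin m) ℝ)
    (S : Matrix (Fin p) (Fin m) ℝ) (Q : Matrix (Fin p) (Fin p) ℝ)
    (u : Fin m → ℝ) (y : Fin p → ℝ) : ℝ :=
  u ⬝ᵥ R.mulVec u + u ⬝ᵥ Sᵀ.mulVec y + y ⬝ᵥ S.mulVec u + y ⬝ᵥ Q.mulVec y

/-- The dissipation matrix `K(P)`. -/
noncomputable def dissipationMatrix {n m p : ℕ}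
    (A : Matrix (Fin n) (Fin n) ℝ) (B : Matrix (Fin n) (Fin m) ℝ)
    (C : Matrix (Fin p) (Fin n) ℝ) (D : Matrix (Fin p) (Fin m) ℝ)
    (R : Matrix (Fin m) (Fin m) ℝ) (S : Matrix (Fin p) (Fin m) ℝ)
    (Q : Matrix (Fin p) (Fin p) ℝ)
    (P : Matrix (Fin n) (Fin n) ℝ) : Matrix (Fin n ⊕ Fin m) (Fin n ⊕ Fin m) ℝ :=
  Matrix.fromBlocks
    (Aᵀ * P * A - P - Cᵀ * Q * C)
    (Aᵀ * P * B - (Cᵀ * S + Cᵀ * Q * D))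
    (Aᵀ * P * B - (Cᵀ * S + Cᵀ * Q * D))ᵀ
    (Bᵀ * P * B - (Dᵀ * Q * D + Dᵀ * S + Sᵀ * D + R))

private lemma step_identity {n m p : ℕ}
    (A : Matrix (Fin n) (Fin n) ℝ) (B : Matrix (Fin n) (Fin m) ℝ)
    (C : Matrix (Fin p) (Fin n) ℝ) (D : Matrix (Fin p) (Fin m) ℝ)
    (R : Matrix (Fin m) (Fin m) ℝ) (S : Matrix (Fin p) (Fin m) ℝ)
    (Q : Matrix (Fin p) (Fin p) ℝ) (hQ : Q.IsSymm)
    (P : Matrix (Fin n) (Fin n) ℝ) (hP : P.IsSymm)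
    (x : Fin n → ℝ) (u : Fin m → ℝ) :
    (A.mulVec x + B.mulVec u) ⬝ᵥ P.mulVec (A.mulVec x + B.mulVec u)
      - x ⬝ᵥ P.mulVec x
      - supplyRate R S Q u (C.mulVec x + D.mulVec u)
    = (Sum.elim x u) ⬝ᵥ (dissipationMatrix A B C D R S Q P).mulVec (Sum.elim x u) := by
  have hP' : Pᵀ = P := hP
  have hQ' : Qᵀ = Q := hQ
  simp only [supplyRate, dissipationMatrix,
    Matrix.fromBlocks_mulVec, sumElim_dotProduct_sumElim,
    Matrix.sub_mulVec, Matrix.add_mulVec, Matrix.mulVec_add, dotProduct_add,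
    add_dotProduct, dotProduct_sub, sub_dotProduct,
    Matrix.dotProduct_mulVec, Matrix.vecMul_vecMul, Matrix.transpose_mul,
    Matrix.transpose_sub, Matrix.transpose_transpose, hP', hQ',
    ← Matrix.mulVec_transpose, Matrix.mulVec_mulVec, Matrix.mul_assoc,
    Sum.elim_comp_inl, Sum.elim_comp_inr]
  ring

theorem lmi_implies_dissipative_with_quadratic_storage {n m p : ℕ}
    (A : Matrix (Fin n) (Fin n) ℝ) (B : Matrix (Fin n) (Fin m) ℝ)
    (C : Matrix (Fin p) (Fin n) ℝ) (D : Matrix (Fin p) (Fin m) ℝ)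
    (R : Matrix (Fin m) (Fin m) ℝ) (S : Matrix (Fin p) (Fin m) ℝ)
    (Q : Matrix (Fin p) (Fin p) ℝ) (hR : R.IsSymm) (hQ : Q.IsSymm)
    (P : Matrix (Fin n) (Fin n) ℝ) (hP : P.IsSymm)
    (hK : (dissipationMatrix A B C D R S Q P).NegSemidef) :
    ∀ (u : ℕ → Fin m → ℝ) (x : ℕ → Fin n → ℝ),
      (∀ k : ℕ, x (k + 1) = A.mulVec (x k) + B.mulVec (u k)) →
      ∀ k₂ k₁ : ℕ, k₂ < k₁ →
        (x k₁) ⬝ᵥ P.mulVec (x k₁) - (x k₂) ⬝ᵥ P.mulVec (x k₂)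
          ≤ ∑ i ∈ Finset.Ico k₂ k₁,
              supplyRate R S Q (u i) (C.mulVec (x i) + D.mulVec (u i)) := by
  intro u x hx k₂ k₁ hlt
  have step : ∀ k : ℕ,
      (x (k+1)) ⬝ᵥ P.mulVec (x (k+1)) - (x k) ⬝ᵥ P.mulVec (x k)
        ≤ supplyRate R S Q (u k) (C.mulVec (x k) + D.mulVec (u k)) := by
    intro k
    have h1 := step_identity A B C D R S Q hQ P hP (x k) (u k)
    rw [← hx k] at h1
    have h2 := hK.dotProduct_mulVec_nonneg (Sum.elim (x k) (u k))
    simp only [star_trivial, Matrix.neg_mulVec, dotProduct_neg] at h2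
    have : (Sum.elim (x k) (u k)) ⬝ᵥ
        (dissipationMatrix A B C D R S Q P).mulVec (Sum.elim (x k) (u k)) ≤ 0 := by
      linarith
    linarith [h1 ▸ this]
  clear hK hx
  induction k₁ with
  | zero => omega
  | succ k ih =>
    rcases Nat.lt_or_ge k₂ k with h | h
    · have hsum : ∑ i ∈ Finset.Ico k₂ (k+1),
          supplyRate R S Q (u i) (C.mulVec (x i) + D.mulVec (u i))
        = (∑ i ∈ Finset.Ico k₂ k,
            supplyRate R S Q (u i) (C.mulVec (x i) + D.mulVec (u i)))
          + supplyRate R S Q (u k) (C.mulVec (x k) + D.mulVec (u k)) :=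
        Finset.sum_Ico_succ_top (le_of_lt h) _
      have := ih h
      have := step k
      linarith [hsum]
    · have hk : k₂ = k := by omega
      subst hk
      simpa using step k₂
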